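/- arXiv:math/0409399 — 3 statements merged into one kernel-verified Lean document; each statement's English description precedes it below -/
import Mathlib

section
/- Let p be a prime number and let G be a nilpotent group that is generated by finitely many elements, each of which has order a power of p. Then G is a finite p-group, i.e. G is finite and every element of G has order a power of p. -/
open Subgroup QuotientGroup
open scoped commutatorElement

private lemma commutator_mul_center_left {G : Type*} [Group G] (x y c : G)
    (hc : c ∈ Subgroup.center G) : ⁅x * c, y⁆ = ⁅x, y⁆ := by
  have hc' := Subgroup.mem_center_iff.mp hc
  have conj : (x * c) * y * (x * c)⁻¹ = x * y * x⁻¹ := by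
    rw [mul_inv_rev, show x * c * y = x * y * c by rw [mul_assoc, ← hc' y, mul_assoc],
      mul_assoc (x * y), mul_inv_cancel_left]
  rw [commutatorElement_def, commutatorElement_def, conj]

private lemma commutator_mul_center {G : Type*} [Group G] (a b z w : G)
    (hz : z ∈ Subgroup.center G) (hw : w ∈ Subgroup.center G) :
    ⁅a * z, b * w⁆ = ⁅a, b⁆ := by
  rw [commutator_mul_center_left a (b * w) z hz, ← commutatorElement_inv,
    commutator_mul_center_left b a w hw, commutatorElement_inv]

private lemma finite_aux (p : ℕ) (hp : p.Prime) :
    ∀ (n : ℕ) (G : Type*) [Group G], Subgroup.upperCentralSeries G n = ⊤ →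
      ∀ s : Finset G, Subgroup.closure (s : Set G) = ⊤ →
        (∀ g ∈ s, ∃ k : ℕ, g ^ p ^ k = 1) → Finite G := by
  intro n
  induction n with
  | zero =>
    intro G _ h s hgen hord
    have hsub : Subsingleton G := ⟨fun x y => by
      have hx : x ∈ Subgroup.upperCentralSeries G 0 := by rw [h]; exact Subgroup.mem_top x
      have hy : y ∈ Subgroup.upperCentralSeries G 0 := by rw [h]; exact Subgroup.mem_top y
      rw [Subgroup.upperCentralSeries_zero] at hx hy
      rw [Subgroup.mem_bot.mp hx, Subgroup.mem_bot.mp hy]⟩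
    exact Finite.of_subsingleton
  | succ n ih =>
    intro G _ h s hgen hord
    classical
    set π := QuotientGroup.mk' (Subgroup.center G) with hπ
    have hsurj : Function.Surjective π := QuotientGroup.mk'_surjective _
    have hQ : Subgroup.upperCentralSeries (G ⧸ Subgroup.center G) n = ⊤ := by
      have hc := Subgroup.comap_upperCentralSeries_quotient_center (G := G) n
      rw [h] at hc
      calc Subgroup.upperCentralSeries (G ⧸ Subgroup.center G) n
          = Subgroup.map π (Subgroup.comap π (Subgroup.upperCentralSeries (G ⧸ Subgroup.center G) n)) :=
            (Subgroup.map_comap_eq_self_of_surjective hsurj _).symm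
        _ = Subgroup.map π ⊤ := by rw [hc]
        _ = ⊤ := Subgroup.map_top_of_surjective π hsurj
    have hQfin : Finite (G ⧸ Subgroup.center G) := by
      refine ih (G ⧸ Subgroup.center G) hQ (s.image π) ?_ ?_
      · rw [Finset.coe_image, ← MonoidHom.map_closure, hgen, Subgroup.map_top_of_surjective π hsurj]
      · intro g hg
        obtain ⟨x, hx, rfl⟩ := Finset.mem_image.mp hg
        obtain ⟨k, hk⟩ := hord x hx
        exact ⟨k, by rw [← map_pow, hk, map_one]⟩
    have hcs : Finite (commutatorSet G) := by
      have hsubset : commutatorSet G ⊆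
          (fun q : (G ⧸ Subgroup.center G) × (G ⧸ Subgroup.center G) =>
            ⁅q.1.out, q.2.out⁆) '' Set.univ := by
        rintro x ⟨g1, g2, rfl⟩
        refine ⟨(π g1, π g2), Set.mem_univ _, ?_⟩
        have key : ∀ g : G, g⁻¹ * (π g).out ∈ Subgroup.center G := by
          intro g
          have : π ((π g).out) = π g := Quotient.out_eq _
          have : π (g⁻¹ * (π g).out) = 1 := by
            rw [map_mul, map_inv, this, inv_mul_cancel]
          exact (QuotientGroup.eq_one_iff _).mp this
        have h1 : (π g1).out = g1 * (g1⁻¹ * (π g1).out) := by rw [mul_inv_cancel_left]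
        have h2 : (π g2).out = g2 * (g2⁻¹ * (π g2).out) := by rw [mul_inv_cancel_left]
        simp only []
        rw [h1, h2, commutator_mul_center _ _ _ _ (key g1) (key g2)]
      exact Set.Finite.to_subtype ((Set.finite_univ.image _).subset hsubset)
    haveI := hcs
    haveI hFG : Group.FG G := Group.fg_iff.mpr ⟨s, hgen, s.finite_toSet⟩
    haveI hcomm : Finite (_root_.commutator G) := inferInstance
    have hofsurj : Function.Surjective (Abelianization.of : G →* Abelianization G) := fun x =>
      QuotientGroup.induction_on x fun g => ⟨g, rfl⟩
    haveI : Group.FG (Abelianization G) := Group.fg_of_surjective hofsurj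
    have htors : Monoid.IsTorsion (Abelianization G) := by
      intro x
      have hcl : Subgroup.closure (Abelianization.of '' (s : Set G)) = ⊤ := by
        rw [← MonoidHom.map_closure, hgen, Subgroup.map_top_of_surjective _ hofsurj]
      have hle : Subgroup.closure (Abelianization.of '' (s : Set G)) ≤
          CommGroup.torsion (Abelianization G) := by
        refine Subgroup.closure_le _ |>.mpr ?_
        rintro y ⟨g, hg, rfl⟩
        obtain ⟨k, hk⟩ := hord g hg
        exact isOfFinOrder_iff_pow_eq_one.mpr
          ⟨p ^ k, pow_pos hp.pos k, by rw [← map_pow, hk, map_one]⟩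
      have : x ∈ CommGroup.torsion (Abelianization G) := (hcl ▸ hle) (Subgroup.mem_top x)
      exact this
    haveI habfin : Finite (Abelianization G) := CommGroup.finite_of_fg_torsion _ htors
    haveI : Finite (G ⧸ _root_.commutator G) := habfin
    exact Finite.of_equiv _
      (Subgroup.groupEquivQuotientProdSubgroup (s := _root_.commutator G)).symm

/-- A nilpotent group generated by finitely many elements of `p`-power order is a
finite `p`-group. -/
theorem stmt_1 (p : ℕ) (hp : p.Prime)
    (G : Type*) [Group G] [Group.IsNilpotent G]
    (s : Finset G) (hgen : Subgroup.closure (s : Set G) = ⊤)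
    (hord : ∀ g ∈ s, ∃ n : ℕ, g ^ p ^ n = 1) :
    Finite G ∧ IsPGroup p G := by
  obtain ⟨n, hn⟩ := Group.IsNilpotent.nilpotent G
  have hfin : Finite G := finite_aux p hp n G hn s hgen hord
  haveI := hfin
  haveI := Fact.mk hp
  have hnormal := ((isNilpotent_of_finite_tfae (G := G)).out 0 3).mp ‹Group.IsNilpotent G›
  obtain ⟨P⟩ : Nonempty (Sylow p G) := inferInstance
  haveI : Unique (Sylow p G) := Sylow.unique_of_normal P (hnormal p ⟨hp⟩ P)
  have hsP : ∀ g ∈ s, g ∈ (P : Subgroup G) := by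
    intro g hg
    obtain ⟨k, hk⟩ := hord g hg
    have hpg : IsPGroup p (Subgroup.zpowers g) := by
      rintro ⟨x, m, rfl⟩
      refine ⟨k, Subtype.ext ?_⟩
      show (g ^ m) ^ (p ^ k : ℕ) = 1
      rw [← zpow_natCast (g ^ m), ← zpow_mul, mul_comm, zpow_mul, zpow_natCast, hk, one_zpow]
    obtain ⟨Q, hQ⟩ := hpg.exists_le_sylow
    have hQP : Q = P := Subsingleton.elim Q P
    exact (hQP ▸ hQ) (Subgroup.mem_zpowers g)
  have hPtop : (P : Subgroup G) = ⊤ := by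
    rw [eq_top_iff, ← hgen]
    exact (Subgroup.closure_le _).mpr hsP
  refine ⟨hfin, fun g => ?_⟩
  obtain ⟨k, hk⟩ := P.isPGroup' ⟨g, by rw [hPtop]; exact Subgroup.mem_top g⟩
  exact ⟨k, by simpa using congrArg Subtype.val hk⟩
end

section
/- Let p be a prime number and let G be a nilpotent group generated by a (possibly infinite) set of elements, each of which has order a power of p. Then G is locally finite: every finitely generated subgroup of G is finite. -/
open Subgroup
open scoped commutatorElement

private lemma aux_comm_cent_right {G : Type*} [Group G] (g h z : G)
    (hz : z ∈ Subgroup.center G) : ⁅g * z, h⁆ = ⁅g, h⁆ := by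
  have hz' : ∀ a : G, a * z = z * a := Subgroup.mem_center_iff.mp hz
  simp only [commutatorElement_def, mul_inv_rev, mul_assoc]
  congr 1
  rw [← mul_assoc z h, ← hz' h, mul_assoc, mul_inv_cancel_left]

private lemma aux_comm_cent_left {G : Type*} [Group G] (g h w : G)
    (hw : w ∈ Subgroup.center G) : ⁅g, h * w⁆ = ⁅g, h⁆ := by
  rw [← commutatorElement_inv, aux_comm_cent_right _ _ _ hw, commutatorElement_inv]

private lemma aux_fin_commSet {G : Type*} [Group G] [Finite (G ⧸ Subgroup.center G)] :
    Finite (commutatorSet G) := by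
  set Z := Subgroup.center G
  let f : (G ⧸ Z) × (G ⧸ Z) → G := fun q => ⁅q.1.out, q.2.out⁆
  have hsub : commutatorSet G ⊆ Set.range f := by
    rintro - ⟨a, b, rfl⟩
    refine ⟨(QuotientGroup.mk a, QuotientGroup.mk b), ?_⟩
    obtain ⟨z, hz⟩ := QuotientGroup.mk_out_eq_mul Z a
    obtain ⟨w, hw⟩ := QuotientGroup.mk_out_eq_mul Z b
    simp only [f, hz, hw]
    rw [aux_comm_cent_right _ _ _ z.2, aux_comm_cent_left _ _ _ w.2]
  exact ((Set.finite_range f).subset hsub).to_subtype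

private lemma aux_comm_torsion {A : Type*} [CommGroup A] {s : Set A}
    (hgen : Subgroup.closure s = ⊤) (h : ∀ g ∈ s, IsOfFinOrder g) :
    Monoid.IsTorsion A := by
  intro g
  have hg : g ∈ Subgroup.closure s := hgen ▸ Subgroup.mem_top g
  refine Subgroup.closure_induction h ?_ ?_ ?_ hg
  · exact IsOfFinOrder.one
  · exact fun x y _ _ hx hy => (Commute.all x y).isOfFinOrder_mul hx hy
  · exact fun x _ hx => isOfFinOrder_inv_iff.mpr hx

private def auxP (G : Type*) [Group G] : Prop :=
  ∀ s : Set G, s.Finite → Subgroup.closure s = ⊤ → (∀ g ∈ s, IsOfFinOrder g) → Finite G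

/-- A nilpotent group generated by finitely many torsion elements is finite. -/
private lemma aux_main (G : Type*) [Group G] [Group.IsNilpotent G] : auxP G := by
  refine nilpotent_center_quotient_ind (P := fun G i _ => @auxP G i) G ?_ ?_
  · exact fun G _ _ _ _ _ _ => Finite.of_subsingleton
  · intro G _ _ ih
    intro s hs hgen htor
    set Z := Subgroup.center G
    let π := QuotientGroup.mk' Z
    have hπ : Function.Surjective π := QuotientGroup.mk'_surjective Z
    have hQgen : Subgroup.closure (π '' s) = ⊤ := by
      rw [← MonoidHom.map_closure, hgen, Subgroup.map_top_of_surjective _ hπ]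
    haveI hQ : Finite (G ⧸ Z) := by
      refine ih (π '' s) (hs.image π) hQgen ?_
      rintro - ⟨g, hg, rfl⟩
      exact π.isOfFinOrder (htor g hg)
    haveI : Finite (commutatorSet G) := aux_fin_commSet
    haveI : Finite (_root_.commutator G) := inferInstance
    haveI : Group.FG G := Group.fg_iff.mpr ⟨s, hgen, hs⟩
    have hofsurj : Function.Surjective (Abelianization.of : G →* Abelianization G) := by
      intro b
      obtain ⟨a, ha⟩ := Quotient.exists_rep b
      exact ⟨a, ha⟩
    have hAbgen : Subgroup.closure ((Abelianization.of : G →* Abelianization G) '' s) = ⊤ := by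
      rw [← MonoidHom.map_closure, hgen, Subgroup.map_top_of_surjective _ hofsurj]
    have htorAb : Monoid.IsTorsion (Abelianization G) := by
      refine aux_comm_torsion hAbgen ?_
      rintro - ⟨g, hg, rfl⟩
      exact (Abelianization.of).isOfFinOrder (htor g hg)
    haveI : Group.FG (Abelianization G) :=
      Group.fg_iff.mpr ⟨_, hAbgen, hs.image _⟩
    haveI : Finite (Abelianization G) := CommGroup.finite_of_fg_torsion _ htorAb
    haveI : Finite (G ⧸ _root_.commutator G) := ‹Finite (Abelianization G)›
    exact Finite.of_equiv _ (Subgroup.groupEquivQuotientProdSubgroup (s := _root_.commutator G)).symm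

private lemma aux_subgroup_finite {G : Type*} [Group G] [Group.IsNilpotent G]
    (t : Set G) (htf : t.Finite) (htor : ∀ g ∈ t, IsOfFinOrder g) :
    Finite (Subgroup.closure t) := by
  set K := Subgroup.closure t
  refine aux_main K (((↑) : K → G) ⁻¹' t) (htf.preimage Subtype.val_injective.injOn)
    Subgroup.closure_closure_coe_preimage ?_
  intro x hx
  have : IsOfFinOrder (x : G) := htor _ hx
  exact Submonoid.isOfFinOrder_coe.mp this

private lemma aux_torsion {G : Type*} [Group G] [Group.IsNilpotent G]
    (s : Set G) (hgen : Subgroup.closure s = ⊤) (htor : ∀ g ∈ s, IsOfFinOrder g) :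
    ∀ g : G, IsOfFinOrder g := by
  intro g
  have hg : g ∈ Subgroup.closure s := hgen ▸ Subgroup.mem_top g
  have hfin : ∃ t : Set G, t ⊆ s ∧ t.Finite ∧ g ∈ Subgroup.closure t := by
    refine Subgroup.closure_induction ?_ ?_ ?_ ?_ hg
    · exact fun x hx => ⟨{x}, Set.singleton_subset_iff.mpr hx, Set.finite_singleton x,
        Subgroup.subset_closure rfl⟩
    · exact ⟨∅, Set.empty_subset s, Set.finite_empty, Subgroup.one_mem _⟩
    · rintro x y _ _ ⟨t₁, h₁s, h₁f, h₁⟩ ⟨t₂, h₂s, h₂f, h₂⟩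
      exact ⟨t₁ ∪ t₂, Set.union_subset h₁s h₂s, h₁f.union h₂f,
        Subgroup.mul_mem _ (Subgroup.closure_mono Set.subset_union_left h₁)
          (Subgroup.closure_mono Set.subset_union_right h₂)⟩
    · rintro x _ ⟨t, hts, htf, hxt⟩
      exact ⟨t, hts, htf, Subgroup.inv_mem _ hxt⟩
  obtain ⟨t, hts, htf, hgt⟩ := hfin
  haveI : Finite (Subgroup.closure t) :=
    aux_subgroup_finite t htf (fun x hx => htor x (hts hx))
  have : IsOfFinOrder (⟨g, hgt⟩ : Subgroup.closure t) := isOfFinOrder_of_finite _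
  exact Submonoid.isOfFinOrder_coe.mpr this

set_option maxHeartbeats 1000000 in
/-- A nilpotent group generated by a (possibly infinite) set of elements of
`p`-power order is locally finite: every finitely generated subgroup is finite. -/
theorem stmt_2 (p : ℕ) (hp : p.Prime)
    (G : Type*) [Group G] [Group.IsNilpotent G]
    (s : Set G) (hgen : Subgroup.closure s = ⊤)
    (hord : ∀ g ∈ s, ∃ n : ℕ, g ^ p ^ n = 1) :
    ∀ H : Subgroup G, H.FG → Finite H := by
  have htor : ∀ g ∈ s, IsOfFinOrder g := by
    intro g hg
    obtain ⟨n, hn⟩ := hord g hg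
    exact isOfFinOrder_iff_pow_eq_one.mpr ⟨p ^ n, pow_pos hp.pos n, hn⟩
  have hT := aux_torsion s hgen htor
  intro H hH
  obtain ⟨T, hT'⟩ := hH
  have := aux_subgroup_finite (G := G) (↑T) T.finite_toSet (fun g _ => hT g)
  rw [hT'] at this
  exact this
end

section
/- Let p be a prime number and let G be a nilpotent group generated by a set of elements, each of which has order a power of p. Then G is a p-group: every element of G has order a power of p. -/
open scoped commutatorElement

/-- The central elements of `p`-power order form a subgroup. -/
def centralPTorsion (p : ℕ) (G : Type*) [Group G] : Subgroup G where
  carrier := {g | g ∈ Subgroup.center G ∧ ∃ n : ℕ, g ^ p ^ n = 1}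
  one_mem' := ⟨Subgroup.one_mem _, 0, by simp⟩
  mul_mem' := by
    rintro a b ⟨ha, n, hn⟩ ⟨hb, m, hm⟩
    refine ⟨mul_mem ha hb, n + m, ?_⟩
    have hc : Commute a b := ((Subgroup.mem_center_iff.mp ha) b).symm
    rw [hc.mul_pow, pow_add, pow_mul, hn, one_pow, one_mul,
      mul_comm (p ^ n), pow_mul, hm, one_pow]
  inv_mem' := by
    rintro a ⟨ha, n, hn⟩
    exact ⟨inv_mem ha, n, by rw [inv_pow, hn, inv_one]⟩

theorem lcs_map_eq_of_surjective {G H : Type*} [Group G] [Group H] (f : G →* H)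
    (hf : Function.Surjective f) (n : ℕ) :
    (Subgroup.lowerCentralSeries (⊤ : Subgroup (G)) n).map f = Subgroup.lowerCentralSeries (⊤ : Subgroup (H)) n := by
  induction n with
  | zero => simpa using Subgroup.map_top_of_surjective f hf
  | succ n ih =>
    show (⁅Subgroup.lowerCentralSeries (⊤ : Subgroup (G)) n, (⊤ : Subgroup G)⁆).map f = ⁅Subgroup.lowerCentralSeries (⊤ : Subgroup (H)) n, ⊤⁆
    rw [Subgroup.map_commutator, ih, Subgroup.map_top_of_surjective f hf]

/-- Main induction: if the lower central series reaches `⊥` at step `c`, the result holds. -/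
theorem stmt_3_aux (p : ℕ) (hp : p.Prime) : ∀ (c : ℕ) (G : Type u) [Group G]
    (s : Set G), Subgroup.closure s = ⊤ → (∀ g ∈ s, ∃ n : ℕ, g ^ p ^ n = 1) →
    Subgroup.lowerCentralSeries (⊤ : Subgroup (G)) c = ⊥ → IsPGroup p G := by
  intro c
  induction c with
  | zero =>
    intro G _ s hgen hord hbot
    intro g
    refine ⟨0, ?_⟩
    have : g ∈ (⊥ : Subgroup G) := hbot ▸ Subgroup.mem_top g
    simpa using Subgroup.mem_bot.mp this
  | succ c ih =>
    intro G _ s hgen hord hbot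
    set K : Subgroup G := Subgroup.lowerCentralSeries (⊤ : Subgroup (G)) c with hK
    -- K is central
    have hKcent : K ≤ Subgroup.center G := by
      intro k hk
      rw [Subgroup.mem_center_iff]
      intro g
      have : ⁅k, g⁆ ∈ Subgroup.lowerCentralSeries (⊤ : Subgroup (G)) (c + 1) :=
        Subgroup.commutator_mem_commutator hk (Subgroup.mem_top g)
      rw [hbot, Subgroup.mem_bot, commutatorElement_eq_one_iff_mul_comm] at this
      exact this.symm
    -- K consists of p-torsion central elements
    have hKZp : K ≤ centralPTorsion p G := by
      cases c with
      | zero =>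
        -- K = ⊤, i.e. G is abelian
        have hKtop : K = ⊤ := rfl
        rw [hKtop, ← hgen]
        rw [Subgroup.closure_le]
        intro a ha
        obtain ⟨n, hn⟩ := hord a ha
        exact ⟨hKcent (hKtop ▸ Subgroup.mem_top a), n, hn⟩
      | succ c' =>
        show ⁅Subgroup.lowerCentralSeries (⊤ : Subgroup (G)) c', (⊤ : Subgroup G)⁆ ≤ centralPTorsion p G
        rw [Subgroup.commutator_le]
        intro x hx y _
        have hcent : ∀ z : G, ⁅x, z⁆ ∈ Subgroup.center G := fun z =>
          hKcent (Subgroup.commutator_mem_commutator hx (Subgroup.mem_top z))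
        -- the map z ↦ ⁅x, z⁆ is a homomorphism
        have hmul : ∀ u v : G, ⁅x, u * v⁆ = ⁅x, u⁆ * ⁅x, v⁆ := by
          intro u v
          have h1 : ⁅x, u * v⁆ = ⁅x, u⁆ * (u * ⁅x, v⁆ * u⁻¹) := by group
          have h2 : u * ⁅x, v⁆ = ⁅x, v⁆ * u := Subgroup.mem_center_iff.mp (hcent v) u
          rw [h1, h2, mul_assoc, mul_inv_cancel, mul_one]
        let φ : G →* G :=
          { toFun := fun z => ⁅x, z⁆
            map_one' := commutatorElement_one_right x
            map_mul' := hmul }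
        have : (⊤ : Subgroup G) ≤ (centralPTorsion p G).comap φ := by
          rw [← hgen, Subgroup.closure_le]
          intro a ha
          obtain ⟨n, hn⟩ := hord a ha
          refine ⟨hcent a, n, ?_⟩
          show φ a ^ p ^ n = 1
          rw [← map_pow, hn, map_one]
        exact this (Subgroup.mem_top y)
    -- the quotient by K is a p-group by induction
    have hnormal : K.Normal := by infer_instance
    have hsurj : Function.Surjective (QuotientGroup.mk' K) := QuotientGroup.mk'_surjective K
    have hQbot : Subgroup.lowerCentralSeries (⊤ : Subgroup (G ⧸ K)) c = ⊥ := by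
      rw [← lcs_map_eq_of_surjective (QuotientGroup.mk' K) hsurj c]
      rw [Subgroup.map_eq_bot_iff, QuotientGroup.ker_mk']
    have hQgen : Subgroup.closure ((QuotientGroup.mk' K) '' s) = ⊤ := by
      rw [← MonoidHom.map_closure, hgen, Subgroup.map_top_of_surjective _ hsurj]
    have hQord : ∀ q ∈ (QuotientGroup.mk' K) '' s, ∃ n : ℕ, q ^ p ^ n = 1 := by
      rintro _ ⟨a, ha, rfl⟩
      obtain ⟨n, hn⟩ := hord a ha
      exact ⟨n, by rw [← map_pow, hn, map_one]⟩
    have hQ : IsPGroup p (G ⧸ K) := ih (G ⧸ K) _ hQgen hQord hQbot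
    -- finish
    intro g
    obtain ⟨k, hk⟩ := hQ (QuotientGroup.mk' K g)
    rw [← map_pow] at hk
    have hgK : g ^ p ^ k ∈ K := by
      rwa [← QuotientGroup.ker_mk' K, MonoidHom.mem_ker]
    obtain ⟨-, m, hm⟩ := hKZp hgK
    exact ⟨k + m, by rw [pow_add, pow_mul, hm]⟩

/-- A nilpotent group generated by a set of elements of `p`-power order is a
`p`-group: every element has order a power of `p`. -/
theorem stmt_3 (p : ℕ) (hp : p.Prime)
    (G : Type*) [Group G] [Group.IsNilpotent G]
    (s : Set G) (hgen : Subgroup.closure s = ⊤)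
    (hord : ∀ g ∈ s, ∃ n : ℕ, g ^ p ^ n = 1) :
    IsPGroup p G := by
  obtain ⟨c, hc⟩ := nilpotent_iff_lowerCentralSeries.mp ‹Group.IsNilpotent G›
  exact stmt_3_aux p hp c G s hgen hord hc
end
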